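/- (i) If μ ∈ M_V(μ₁,μ₂), then the projection μ₍₁,₂₎ of μ onto the first two coordinates belongs to M(μ₁,μ₂). (ii) If μ ∈ M(μ₁,μ₂), then Λ_μ(S₁) ≥ 0 μ-a.s. and the law μ_Λ of (S₁,S₂,√(Λ_μ(S₁))) under μ belongs to M_V(μ₁,μ₂). -/

import Mathlib

open MeasureTheory Set Filter
open scoped ProbabilityTheory

noncomputable section

/-- The log-contract payoff `L(x) = -(2/τ) ln x`. -/
def Lf (τ x : ℝ) : ℝ := -(2 / τ) * Real.log x

/-- `μ` is a market smile: a probability measure concentrated on `(0,∞)`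
with mean `S₀` and integrable logarithm. -/
structure IsMarginal (S₀ : ℝ) (μ : Measure ℝ) : Prop where
  prob : IsProbabilityMeasure μ
  conc : μ (Set.Ioi (0 : ℝ))ᶜ = 0
  int_id : Integrable (fun s => s) μ
  mean : (∫ s, s ∂μ) = S₀
  int_log : Integrable (fun s => |Real.log s|) μ

/-- `μ ∈ M(μ₁,μ₂)`: a martingale coupling of `μ₁` and `μ₂`. -/
structure MemM (μ₁ μ₂ : Measure ℝ) (μ : Measure (ℝ × ℝ)) : Prop where
  prob : IsProbabilityMeasure μ
  fst : μ.map Prod.fst = μ₁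
  snd : μ.map Prod.snd = μ₂
  mart : ∀ h : ℝ → ℝ, Measurable h → (∀ x, |h x| ≤ 1) →
    ∫ p : ℝ × ℝ, h p.1 * (p.2 - p.1) ∂μ = 0

/-- `μ ∈ M_V(μ₁,μ₂)`: a joint model for `(S₁,S₂,V)` consistent with the smiles. -/
structure MemMV (τ : ℝ) (μ₁ μ₂ : Measure ℝ) (μ : Measure (ℝ × ℝ × ℝ)) : Prop where
  prob : IsProbabilityMeasure μ
  fst : μ.map (fun p => p.1) = μ₁
  snd : μ.map (fun p => p.2.1) = μ₂
  vnonneg : μ {p : ℝ × ℝ × ℝ | p.2.2 < 0} = 0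
  int_v2 : Integrable (fun p : ℝ × ℝ × ℝ => p.2.2 ^ 2) μ
  mart : ∀ h : ℝ → ℝ → ℝ, Measurable (Function.uncurry h) → (∀ x v, |h x v| ≤ 1) →
    ∫ p : ℝ × ℝ × ℝ, h p.1 p.2.2 * (p.2.1 - p.1) ∂μ = 0
  vix : ∀ h : ℝ → ℝ → ℝ, Measurable (Function.uncurry h) → (∀ x v, |h x v| ≤ 1) →
    ∫ p : ℝ × ℝ × ℝ, h p.1 p.2.2 * (Lf τ (p.2.1 / p.1) - p.2.2 ^ 2) ∂μ = 0

/-- `Λ` is (a version of) `Λ_μ`, i.e. `Λ(S₁) = E^μ[L(S₂/S₁) | S₁]`, expressed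
through bounded measurable test functions of `S₁`. -/
def IsCondLambda (τ : ℝ) (μ : Measure (ℝ × ℝ)) (Λ : ℝ → ℝ) : Prop :=
  Measurable Λ ∧ Integrable (fun p : ℝ × ℝ => Λ p.1) μ ∧
    ∀ h : ℝ → ℝ, Measurable h → (∀ x, |h x| ≤ 1) →
      ∫ p : ℝ × ℝ, h p.1 * Lf τ (p.2 / p.1) ∂μ = ∫ p : ℝ × ℝ, h p.1 * Λ p.1 ∂μ

/-- (i) The projection onto the first two coordinates maps `M_V(μ₁,μ₂)` into
`M(μ₁,μ₂)`; (ii) for `μ ∈ M(μ₁,μ₂)`, a version `Λ_μ` of the conditional price of the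
FSLC exists, every such version is `μ`-a.s. nonnegative, and the law of
`(S₁,S₂,√(Λ_μ(S₁)))` under `μ` belongs to `M_V(μ₁,μ₂)`. -/


-- generic sign trick
lemma sign_trick {α : Type*} [MeasurableSpace α] (μ : Measure α) (g : α → ℝ)
    (hgi : Integrable g μ) (_hgm : Measurable g)
    (H : ∀ h : α → ℝ, Measurable h → (∀ x, |h x| ≤ 1) → ∫ x, h x * g x ∂μ = 0) :
    ∀ᵐ x ∂μ, g x = 0 := by
  have hm : Measurable (fun x => if 0 ≤ g x then (1:ℝ) else -1) :=
    Measurable.ite (measurableSet_le measurable_const _hgm) measurable_const measurable_const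
  have hb : ∀ x, |(if 0 ≤ g x then (1:ℝ) else -1)| ≤ 1 := by intro x; split <;> simp
  have h0 := H _ hm hb
  have heq : ∀ x, (if 0 ≤ g x then (1:ℝ) else -1) * g x = |g x| := by
    intro x; rcases le_or_gt 0 (g x) with h | h
    · rw [if_pos h, one_mul, abs_of_nonneg h]
    · rw [if_neg (not_le.2 h), abs_of_neg h]; ring
  simp_rw [heq] at h0
  filter_upwards [(integral_eq_zero_iff_of_nonneg (fun x => abs_nonneg (g x)) hgi.abs).1 h0]
    with x hx using abs_eq_zero.1 hx

-- factored sign trick on a product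
lemma sign_trick_fst (μ : Measure (ℝ × ℝ)) (f g : ℝ → ℝ)
    (hf : Measurable f) (hg : Measurable g)
    (hfi : Integrable (fun p : ℝ × ℝ => f p.1) μ) (hgi : Integrable (fun p : ℝ × ℝ => g p.1) μ)
    (H : ∀ h : ℝ → ℝ, Measurable h → (∀ x, |h x| ≤ 1) →
      ∫ p : ℝ × ℝ, h p.1 * f p.1 ∂μ = ∫ p : ℝ × ℝ, h p.1 * g p.1 ∂μ) :
    ∀ᵐ p ∂μ, f p.1 = g p.1 := by
  set d : ℝ → ℝ := fun x => f x - g x with hd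
  have hdm : Measurable d := hf.sub hg
  have hm : Measurable (fun x => if 0 ≤ d x then (1:ℝ) else -1) :=
    Measurable.ite (measurableSet_le measurable_const hdm) measurable_const measurable_const
  have hb : ∀ x, |(if 0 ≤ d x then (1:ℝ) else -1)| ≤ 1 := by intro x; split <;> simp
  have h0 : ∫ p : ℝ × ℝ, (if 0 ≤ d p.1 then (1:ℝ) else -1) * d p.1 ∂μ = 0 := by
    have h1 := H _ hm hb
    have : (fun p : ℝ × ℝ => (if 0 ≤ d p.1 then (1:ℝ) else -1) * d p.1)
        = fun p => (if 0 ≤ d p.1 then (1:ℝ) else -1) * f p.1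
          - (if 0 ≤ d p.1 then (1:ℝ) else -1) * g p.1 := by
      funext p; simp only [hd]; ring
    have hA : Integrable (fun p : ℝ × ℝ => (if 0 ≤ d p.1 then (1:ℝ) else -1) * f p.1) μ :=
      hfi.bdd_mul ((hm.comp measurable_fst).aestronglyMeasurable)
        (Eventually.of_forall fun p => by rw [Real.norm_eq_abs]; exact hb p.1)
    have hB : Integrable (fun p : ℝ × ℝ => (if 0 ≤ d p.1 then (1:ℝ) else -1) * g p.1) μ :=
      hgi.bdd_mul ((hm.comp measurable_fst).aestronglyMeasurable)
        (Eventually.of_forall fun p => by rw [Real.norm_eq_abs]; exact hb p.1)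
    rw [this, integral_sub hA hB, h1, sub_self]
  have heq : ∀ x, (if 0 ≤ d x then (1:ℝ) else -1) * d x = |d x| := by
    intro x; rcases le_or_gt 0 (d x) with h | h
    · rw [if_pos h, one_mul, abs_of_nonneg h]
    · rw [if_neg (not_le.2 h), abs_of_neg h]; ring
  simp_rw [heq] at h0
  have habs : Integrable (fun p : ℝ × ℝ => |d p.1|) μ := (hfi.sub hgi).abs
  have h3 : (fun p : ℝ × ℝ => |d p.1|) =ᵐ[μ] 0 :=
    (integral_eq_zero_iff_of_nonneg (fun p : ℝ × ℝ => abs_nonneg (d p.1)) habs).1 h0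
  filter_upwards [h3] with p hp
  have := abs_eq_zero.1 hp
  simpa [hd, sub_eq_zero] using this

theorem projection_MV_M (τ S₀ : ℝ) (hτ : 0 < τ) (hS₀ : 0 < S₀)
    (μ₁ μ₂ : Measure ℝ) (h₁ : IsMarginal S₀ μ₁) (h₂ : IsMarginal S₀ μ₂) :
    (∀ μ : Measure (ℝ × ℝ × ℝ), MemMV τ μ₁ μ₂ μ →
      MemM μ₁ μ₂ (μ.map (fun p => (p.1, p.2.1)))) ∧
    (∀ μ : Measure (ℝ × ℝ), MemM μ₁ μ₂ μ →
      (∃ Λ : ℝ → ℝ, IsCondLambda τ μ Λ) ∧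
      ∀ Λ : ℝ → ℝ, IsCondLambda τ μ Λ →
        (∀ᵐ p ∂μ, 0 ≤ Λ p.1) ∧
        MemMV τ μ₁ μ₂ (μ.map (fun p => (p.1, p.2, Real.sqrt (Λ p.1))))) := by
  constructor
  · intro μ hμ
    haveI := hμ.prob
    have hF : Measurable (fun p : ℝ × ℝ × ℝ => (p.1, p.2.1)) :=
      measurable_fst.prodMk (measurable_fst.comp measurable_snd)
    constructor
    · exact Measure.isProbabilityMeasure_map hF.aemeasurable
    · rw [Measure.map_map measurable_fst hF]; exact hμ.fst
    · rw [Measure.map_map measurable_snd hF]; exact hμ.snd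
    · intro h hm hb
      rw [integral_map hF.aemeasurable]
      · exact hμ.mart (fun x _ => h x) (hm.comp measurable_fst) (fun x _ => hb x)
      · exact ((hm.comp measurable_fst).mul
          (measurable_snd.sub measurable_fst)).aestronglyMeasurable
  · intro μ hμ
    haveI := hμ.prob
    haveI : IsProbabilityMeasure μ₁ := h₁.prob
    -- measurability of G
    set G : ℝ × ℝ → ℝ := fun p => Lf τ (p.2 / p.1) with hG
    have hGm : Measurable G := by
      simp only [hG, Lf]
      exact measurable_const.mul (Real.measurable_log.comp (measurable_snd.div measurable_fst))
    -- a.e. positivity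
    have hpos1 : ∀ᵐ p : ℝ × ℝ ∂μ, 0 < p.1 := by
      rw [ae_iff]
      have : {p : ℝ × ℝ | ¬ 0 < p.1} = Prod.fst ⁻¹' (Set.Ioi 0)ᶜ := by ext p; simp
      rw [this, ← Measure.map_apply measurable_fst measurableSet_Ioi.compl, hμ.fst]
      exact h₁.conc
    have hpos2 : ∀ᵐ p : ℝ × ℝ ∂μ, 0 < p.2 := by
      rw [ae_iff]
      have : {p : ℝ × ℝ | ¬ 0 < p.2} = Prod.snd ⁻¹' (Set.Ioi 0)ᶜ := by ext p; simp
      rw [this, ← Measure.map_apply measurable_snd measurableSet_Ioi.compl, hμ.snd]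
      exact h₂.conc
    -- integrability of logs
    have hlog1 : Integrable (fun p : ℝ × ℝ => Real.log p.1) μ := by
      have h := h₁.int_log
      rw [← hμ.fst] at h
      have h' : Integrable (fun p : ℝ × ℝ => |Real.log p.1|) μ :=
        (integrable_map_measure (Real.measurable_log.abs.aestronglyMeasurable)
          measurable_fst.aemeasurable).mp h
      exact h'.mono' (Real.measurable_log.comp measurable_fst).aestronglyMeasurable
        (Eventually.of_forall fun p => by rw [Real.norm_eq_abs])
    have hlog2 : Integrable (fun p : ℝ × ℝ => Real.log p.2) μ := by
      have h := h₂.int_log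
      rw [← hμ.snd] at h
      have h' : Integrable (fun p : ℝ × ℝ => |Real.log p.2|) μ :=
        (integrable_map_measure (Real.measurable_log.abs.aestronglyMeasurable)
          measurable_snd.aemeasurable).mp h
      exact h'.mono' (Real.measurable_log.comp measurable_snd).aestronglyMeasurable
        (Eventually.of_forall fun p => by rw [Real.norm_eq_abs])
    -- integrability of G
    have hGae : G =ᵐ[μ] fun p => -(2/τ) * (Real.log p.2 - Real.log p.1) := by
      filter_upwards [hpos1, hpos2] with p hp1 hp2
      simp only [hG, Lf, Real.log_div hp2.ne' hp1.ne']
    have intG : Integrable G μ := (((hlog2.sub hlog1).const_mul (-(2/τ))).congr hGae.symm)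
    -- disintegration
    set κ := μ.condKernel with hκdef
    have hfst : μ.fst = μ₁ := hμ.fst
    have hdis : μ₁ ⊗ₘ κ = μ := by rw [← hfst]; exact μ.disintegrate _
    -- Λ₀
    set Λ₀ : ℝ → ℝ := fun x => ∫ y, G (x, y) ∂κ x with hΛ₀def
    have hΛ₀m : Measurable Λ₀ :=
      (hGm.stronglyMeasurable.integral_kernel_prod_right').measurable
    have intGc : Integrable G (μ₁ ⊗ₘ κ) := by rw [hdis]; exact intG
    have hsec := (Measure.integrable_compProd_iff hGm.aestronglyMeasurable).mp intGc
    have intΛ₀ : Integrable Λ₀ μ₁ := by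
      refine hsec.2.mono' hΛ₀m.aestronglyMeasurable (Eventually.of_forall fun x => ?_)
      exact norm_integral_le_integral_norm _
    -- transfer: integral of fun of fst
    have key2 : ∀ (f : ℝ → ℝ), Measurable f →
        ∫ p : ℝ × ℝ, f p.1 ∂μ = ∫ x, f x ∂μ₁ := by
      intro f hf
      rw [← hμ.fst, integral_map measurable_fst.aemeasurable hf.aestronglyMeasurable]
    have intΛ₀μ : Integrable (fun p : ℝ × ℝ => Λ₀ p.1) μ := by
      have h := intΛ₀
      rw [← hμ.fst] at h
      exact (integrable_map_measure hΛ₀m.aestronglyMeasurable measurable_fst.aemeasurable).mp h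
    -- key exchange
    have key : ∀ h : ℝ → ℝ, Measurable h → (∀ x, |h x| ≤ 1) →
        ∫ p : ℝ × ℝ, h p.1 * G p ∂μ = ∫ x, h x * Λ₀ x ∂μ₁ := by
      intro h hm hb
      have hint : Integrable (fun p : ℝ × ℝ => h p.1 * G p) μ :=
        intG.bdd_mul (hm.comp measurable_fst).aestronglyMeasurable
          (Eventually.of_forall fun p => by rw [Real.norm_eq_abs]; exact hb p.1)
      have hintc : Integrable (fun p : ℝ × ℝ => h p.1 * G p) (μ₁ ⊗ₘ κ) := by
        rw [hdis]; exact hint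
      rw [← hdis, Measure.integral_compProd hintc]
      refine integral_congr_ae (Eventually.of_forall fun x => ?_)
      simp only
      rw [integral_const_mul]
    -- IsCondLambda for Λ₀
    have hcond3 : ∀ h : ℝ → ℝ, Measurable h → (∀ x, |h x| ≤ 1) →
        ∫ p : ℝ × ℝ, h p.1 * G p ∂μ = ∫ p : ℝ × ℝ, h p.1 * Λ₀ p.1 ∂μ := by
      intro h hm hb
      rw [key h hm hb, key2 (fun x => h x * Λ₀ x) (hm.mul hΛ₀m)]
    -- conditional mean
    have hint2 : Integrable (fun p : ℝ × ℝ => p.2) μ := by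
      have h := h₂.int_id
      rw [← hμ.snd] at h
      exact (integrable_map_measure measurable_id.aestronglyMeasurable
        measurable_snd.aemeasurable).mp h
    have hint1 : Integrable (fun p : ℝ × ℝ => p.1) μ := by
      have h := h₁.int_id
      rw [← hμ.fst] at h
      exact (integrable_map_measure measurable_id.aestronglyMeasurable
        measurable_fst.aemeasurable).mp h
    have hint2c : Integrable (fun p : ℝ × ℝ => p.2) (μ₁ ⊗ₘ κ) := by rw [hdis]; exact hint2
    have msec := (Measure.integrable_compProd_iff
      (measurable_snd.aestronglyMeasurable (μ := μ₁ ⊗ₘ κ))).mp hint2c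
    set m : ℝ → ℝ := fun x => ∫ y, y ∂κ x with hmdef
    have hmm : Measurable m := by
      have : Measurable (fun q : ℝ × ℝ => q.2) := measurable_snd
      exact (this.stronglyMeasurable.integral_kernel_prod_right').measurable
    have hmint : Integrable m μ₁ := by
      refine msec.2.mono' hmm.aestronglyMeasurable (Eventually.of_forall fun x => ?_)
      exact norm_integral_le_integral_norm _
    have hmart' : ∀ h : ℝ → ℝ, Measurable h → (∀ x, |h x| ≤ 1) →
        ∫ x, h x * (m x - x) ∂μ₁ = 0 := by
      intro h hm hb
      have hint : Integrable (fun p : ℝ × ℝ => h p.1 * (p.2 - p.1)) μ :=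
        (hint2.sub hint1).bdd_mul (hm.comp measurable_fst).aestronglyMeasurable
          (Eventually.of_forall fun p => by rw [Real.norm_eq_abs]; exact hb p.1)
      have hintc : Integrable (fun p : ℝ × ℝ => h p.1 * (p.2 - p.1)) (μ₁ ⊗ₘ κ) := by
        rw [hdis]; exact hint
      have e1 : ∫ p : ℝ × ℝ, h p.1 * (p.2 - p.1) ∂μ
          = ∫ x, ∫ y, h x * (y - x) ∂κ x ∂μ₁ := by
        rw [← hdis, Measure.integral_compProd hintc]
      have e2 : ∫ x, ∫ y, h x * (y - x) ∂κ x ∂μ₁ = ∫ x, h x * (m x - x) ∂μ₁ := by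
        refine integral_congr_ae ?_
        filter_upwards [msec.1] with x hx
        rw [integral_const_mul, integral_sub hx (integrable_const x), integral_const,
          probReal_univ, one_smul]
      rw [← e2, ← e1, hμ.mart h hm hb]
    have hmean : ∀ᵐ x ∂μ₁, m x = x := by
      have := sign_trick μ₁ (fun x => m x - x) (hmint.sub h₁.int_id) (hmm.sub measurable_id)
        hmart'
      filter_upwards [this] with x hx
      linarith [hx]
    -- kernel concentration
    have hconc : ∀ᵐ x ∂μ₁, κ x (Set.Ioi (0:ℝ))ᶜ = 0 := by
      have h0 : μ (Prod.snd ⁻¹' (Set.Ioi (0:ℝ))ᶜ) = 0 := by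
        rw [← Measure.map_apply measurable_snd measurableSet_Ioi.compl, hμ.snd]
        exact h₂.conc
      rw [← hdis, Measure.compProd_apply (measurable_snd measurableSet_Ioi.compl)] at h0
      have h0' : ∫⁻ x, κ x ((Set.Ioi (0:ℝ))ᶜ) ∂μ₁ = 0 := by
        rw [← h0]
        refine lintegral_congr fun x => ?_
        congr 1
      have h1 := (lintegral_eq_zero_iff (κ.measurable_coe measurableSet_Ioi.compl)).mp h0'
      filter_upwards [h1] with x hx
      exact hx
    -- nonnegativity of Λ₀
    have hΛ₀nonneg : ∀ᵐ x ∂μ₁, 0 ≤ Λ₀ x := by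
      have hx1 : ∀ᵐ x ∂μ₁, 0 < x := by
        rw [ae_iff]
        have : {x : ℝ | ¬ 0 < x} = (Set.Ioi (0:ℝ))ᶜ := by ext x; simp
        rw [this]; exact h₁.conc
      filter_upwards [hx1, hconc, hsec.1, msec.1, hmean] with x hx hkc hxsec hyint hmx
      haveI : IsProbabilityMeasure (κ x) := inferInstance
      have haepos : ∀ᵐ y ∂κ x, 0 < y := by
        rw [ae_iff]
        have : {y : ℝ | ¬ 0 < y} = (Set.Ioi (0:ℝ))ᶜ := by ext y; simp
        rw [this]; exact hkc
      have hIlog : Integrable (fun y => Real.log (y / x)) (κ x) := by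
        have h' := hxsec.const_mul (-(τ/2))
        refine h'.congr (Eventually.of_forall fun y => ?_)
        simp only [hG, Lf]
        have hτ0 : τ ≠ 0 := ne_of_gt hτ
        field_simp
      have hIlin : Integrable (fun y => y / x - 1) (κ x) :=
        (hyint.div_const x).sub (integrable_const 1)
      have hle : ∫ y, Real.log (y / x) ∂κ x ≤ ∫ y, (y / x - 1) ∂κ x := by
        refine integral_mono_ae hIlog hIlin ?_
        filter_upwards [haepos] with y hy
        exact Real.log_le_sub_one_of_pos (div_pos hy hx)
      have heval : ∫ y, (y / x - 1) ∂κ x = 0 := by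
        have hmx' : (∫ y, y ∂κ x) = x := hmx
        rw [integral_sub (hyint.div_const x) (integrable_const 1), integral_div, hmx',
          div_self hx.ne', integral_const, probReal_univ, one_smul, sub_self]
      have hI : ∫ y, Real.log (y / x) ∂κ x ≤ 0 := by rw [heval] at hle; exact hle
      have hΛval : Λ₀ x = -(2/τ) * ∫ y, Real.log (y / x) ∂κ x := by
        simp only [hΛ₀def, hG, Lf]
        rw [integral_const_mul]
      rw [hΛval]
      have h2τ : (0:ℝ) < 2/τ := by positivity
      nlinarith
    -- pull back nonnegativity of Λ₀
    have hΛ₀nonnegμ : ∀ᵐ p : ℝ × ℝ ∂μ, 0 ≤ Λ₀ p.1 := by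
      have h' := hΛ₀nonneg
      rw [← hμ.fst] at h'
      exact (ae_map_iff measurable_fst.aemeasurable
        (measurableSet_le measurable_const hΛ₀m)).mp h'
    refine ⟨⟨Λ₀, hΛ₀m, intΛ₀μ, hcond3⟩, ?_⟩
    rintro Λ ⟨hΛm, hΛint, hΛtest⟩
    have hΛeq : ∀ᵐ p ∂μ, Λ p.1 = Λ₀ p.1 := by
      refine sign_trick_fst μ Λ Λ₀ hΛm hΛ₀m hΛint intΛ₀μ ?_
      intro h hm hb
      exact (hΛtest h hm hb).symm.trans (hcond3 h hm hb)
    have hΛnonneg : ∀ᵐ p ∂μ, 0 ≤ Λ p.1 := by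
      filter_upwards [hΛeq, hΛ₀nonnegμ] with p e1 e2
      rw [e1]; exact e2
    refine ⟨hΛnonneg, ?_⟩
    -- the lifted model
    have hsq : Measurable fun x => Real.sqrt (Λ x) := Real.continuous_sqrt.measurable.comp hΛm
    set F : ℝ × ℝ → ℝ × ℝ × ℝ := fun p => (p.1, p.2, Real.sqrt (Λ p.1)) with hFdef
    have hFm : Measurable F :=
      measurable_fst.prodMk (measurable_snd.prodMk (hsq.comp measurable_fst))
    have hHm : ∀ h : ℝ → ℝ → ℝ, Measurable (Function.uncurry h) →
        Measurable (fun x => h x (Real.sqrt (Λ x))) := by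
      intro h hm
      exact hm.comp (measurable_id.prodMk hsq)
    constructor
    · exact Measure.isProbabilityMeasure_map hFm.aemeasurable
    · rw [Measure.map_map measurable_fst hFm]
      exact hμ.fst
    · have hg2 : Measurable (fun p : ℝ × ℝ × ℝ => p.2.1) :=
        measurable_fst.comp measurable_snd
      rw [Measure.map_map hg2 hFm]
      exact hμ.snd
    · have hms : MeasurableSet {p : ℝ × ℝ × ℝ | p.2.2 < 0} :=
        measurableSet_lt (measurable_snd.comp measurable_snd) measurable_const
      rw [Measure.map_apply hFm hms]
      have he : F ⁻¹' {p : ℝ × ℝ × ℝ | p.2.2 < 0} = ∅ := by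
        ext p
        simp [hFdef, not_lt, Real.sqrt_nonneg]
      rw [he]
      simp
    · refine (integrable_map_measure
        ((measurable_snd.comp measurable_snd).pow_const 2).aestronglyMeasurable
        hFm.aemeasurable).mpr ?_
      refine hΛint.congr ?_
      filter_upwards [hΛnonneg] with p hp
      simp only [hFdef, Function.comp_apply]
      exact (Real.sq_sqrt hp).symm
    · intro h hm hb
      rw [integral_map hFm.aemeasurable
        (f := fun p : ℝ × ℝ × ℝ => h p.1 p.2.2 * (p.2.1 - p.1))
        (((hm.comp (measurable_fst.prodMk (measurable_snd.comp measurable_snd))).mul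
          ((measurable_fst.comp measurable_snd).sub measurable_fst)).aestronglyMeasurable)]
      exact hμ.mart (fun x => h x (Real.sqrt (Λ x))) (hHm h hm) (fun x => hb x _)
    · intro h hm hb
      have hLfm3 : Measurable (fun p : ℝ × ℝ × ℝ => Lf τ (p.2.1 / p.1)) := by
        simp only [Lf]
        exact measurable_const.mul (Real.measurable_log.comp
          ((measurable_fst.comp measurable_snd).div measurable_fst))
      rw [integral_map hFm.aemeasurable
        (f := fun p : ℝ × ℝ × ℝ => h p.1 p.2.2 * (Lf τ (p.2.1 / p.1) - p.2.2 ^ 2))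
        (((hm.comp (measurable_fst.prodMk (measurable_snd.comp measurable_snd))).mul
          (hLfm3.sub ((measurable_snd.comp measurable_snd).pow_const 2))).aestronglyMeasurable)]
      show (∫ p : ℝ × ℝ, h p.1 (Real.sqrt (Λ p.1)) *
        (Lf τ (p.2 / p.1) - Real.sqrt (Λ p.1) ^ 2) ∂μ) = 0
      have HM : Measurable (fun x => h x (Real.sqrt (Λ x))) := hHm h hm
      have Hb : ∀ x, |h x (Real.sqrt (Λ x))| ≤ 1 := fun x => hb x _
      have intHG : Integrable
          (fun p : ℝ × ℝ => h p.1 (Real.sqrt (Λ p.1)) * Lf τ (p.2 / p.1)) μ :=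
        intG.bdd_mul (HM.comp measurable_fst).aestronglyMeasurable
          (Eventually.of_forall fun p => by rw [Real.norm_eq_abs]; exact Hb p.1)
      have intHΛ : Integrable
          (fun p : ℝ × ℝ => h p.1 (Real.sqrt (Λ p.1)) * Λ p.1) μ :=
        hΛint.bdd_mul (HM.comp measurable_fst).aestronglyMeasurable
          (Eventually.of_forall fun p => by rw [Real.norm_eq_abs]; exact Hb p.1)
      have e : (fun p : ℝ × ℝ => h p.1 (Real.sqrt (Λ p.1)) *
          (Lf τ (p.2 / p.1) - Real.sqrt (Λ p.1) ^ 2))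
          =ᵐ[μ] fun p => h p.1 (Real.sqrt (Λ p.1)) * Lf τ (p.2 / p.1)
            - h p.1 (Real.sqrt (Λ p.1)) * Λ p.1 := by
        filter_upwards [hΛnonneg] with p hp
        rw [Real.sq_sqrt hp]
        ring
      rw [integral_congr_ae e, integral_sub intHG intHΛ, hΛtest _ HM Hb, sub_self]
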